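/- Let x ~ N(0, τ² + σ²) and let σ̂² ~ σ²·χ²_m/m be independent of x. Let F̃(t) = P( x²/(τ² + σ̂²) ≥ t ) and let T̃_m and Φ̃ denote the upper tail functions of the t-distribution with m degrees of freedom and the standard normal, respectively. Then for every t ≥ 0, 2Φ̃(√t) ≤ F̃(t) ≤ 2T̃_m(√t). -/

import Mathlib

open MeasureTheory

/-- Density of the standard normal distribution. -/
noncomputable def stdNormalPDF (t : ℝ) : ℝ :=
  (Real.sqrt (2 * Real.pi))⁻¹ * Real.exp (-(t ^ 2) / 2)

/-- Upper tail function of the standard normal distribution. -/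
noncomputable def stdNormalTail (t : ℝ) : ℝ := ∫ s in Set.Ioi t, stdNormalPDF s

/-- Density of Student's t-distribution with `m` degrees of freedom. -/
noncomputable def tPDF (m : ℕ) (t : ℝ) : ℝ :=
  Real.Gamma (((m : ℝ) + 1) / 2) / (Real.sqrt (Real.pi * m) * Real.Gamma ((m : ℝ) / 2)) *
    (1 + t ^ 2 / m) ^ (-(((m : ℝ) + 1) / 2))

/-- Upper tail function of Student's t-distribution with `m` degrees of freedom. -/
noncomputable def tTail (m : ℕ) (t : ℝ) : ℝ := ∫ s in Set.Ioi t, tPDF m s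

/-- Density of the normal distribution with mean 0 and variance `v`. -/
noncomputable def normalPDF (v t : ℝ) : ℝ :=
  (Real.sqrt (2 * Real.pi * v))⁻¹ * Real.exp (-(t ^ 2) / (2 * v))

/-- Density of `U = V/m` where `V ~ χ²_m`. -/
noncomputable def chi2OverMPDF (m : ℕ) (u : ℝ) : ℝ :=
  if 0 < u then
    (m : ℝ) * (((m : ℝ) * u) ^ ((m : ℝ) / 2 - 1) * Real.exp (-((m : ℝ) * u) / 2)) /
      (2 ^ ((m : ℝ) / 2) * Real.Gamma ((m : ℝ) / 2))
  else 0

/-- `F̃(t) = P(x²/(τ² + σ̂²) ≥ t)` where `x ~ N(0, τ² + σ²)` and `σ̂² ~ σ² χ²_m / m`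
are independent. -/
noncomputable def welchTail (m : ℕ) (τ2 σ2 t : ℝ) : ℝ :=
  ∫ x : ℝ, ∫ y in Set.Ioi (0 : ℝ),
    Set.indicator {p : ℝ × ℝ | t ≤ p.1 ^ 2 / (τ2 + p.2)} (fun _ => (1 : ℝ)) (x, y) *
      normalPDF (τ2 + σ2) x * (σ2⁻¹ * chi2OverMPDF m (y / σ2))

open Set Real

variable {m : ℕ} {t : ℝ}

lemma stdNormalPDF_nonneg (x : ℝ) : 0 ≤ stdNormalPDF x := by
  unfold stdNormalPDF; positivity

lemma stdNormalPDF_anti {x y : ℝ} (hx : 0 ≤ x) (hxy : x ≤ y) :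
    stdNormalPDF y ≤ stdNormalPDF x := by
  unfold stdNormalPDF
  have h2 : Real.exp (-(y^2)/2) ≤ Real.exp (-(x^2)/2) := by
    apply Real.exp_le_exp.2; nlinarith
  have : (0:ℝ) ≤ (Real.sqrt (2 * Real.pi))⁻¹ := by positivity
  exact mul_le_mul_of_nonneg_left h2 this

lemma integrable_stdNormalPDF : Integrable stdNormalPDF := by
  have : stdNormalPDF = fun x => (Real.sqrt (2 * Real.pi))⁻¹ * Real.exp (-(2:ℝ)⁻¹ * x ^ 2) := by
    funext x; unfold stdNormalPDF; ring_nf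
  rw [this]
  exact (integrable_exp_neg_mul_sq (by norm_num)).const_mul _

lemma stdNormalTail_nonneg (a : ℝ) : 0 ≤ stdNormalTail a :=
  setIntegral_nonneg measurableSet_Ioi fun x _ => stdNormalPDF_nonneg x

lemma stdNormalTail_split {a b : ℝ} (hab : a ≤ b) :
    stdNormalTail a = (∫ x in Ioc a b, stdNormalPDF x) + stdNormalTail b := by
  unfold stdNormalTail
  rw [← setIntegral_union (Ioc_disjoint_Ioi le_rfl) measurableSet_Ioi
      (integrable_stdNormalPDF.integrableOn) (integrable_stdNormalPDF.integrableOn),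
    Ioc_union_Ioi_eq_Ioi hab]

lemma stdNormalTail_anti : Antitone stdNormalTail := by
  intro a b hab
  rw [stdNormalTail_split hab]
  have : 0 ≤ ∫ x in Ioc a b, stdNormalPDF x :=
    setIntegral_nonneg measurableSet_Ioc fun x _ => stdNormalPDF_nonneg x
  linarith

lemma stdNormalTail_le_one (a : ℝ) : stdNormalTail a ≤ 1 := by
  have h1 : stdNormalTail a ≤ ∫ x, stdNormalPDF x := by
    exact setIntegral_le_integral integrable_stdNormalPDF
      (Filter.Eventually.of_forall fun x => stdNormalPDF_nonneg x)
  have h2 : ∫ x, stdNormalPDF x = 1 := by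
    unfold stdNormalPDF
    rw [MeasureTheory.integral_const_mul]
    have : ∀ x : ℝ, Real.exp (-(x^2)/2) = Real.exp (-(2:ℝ)⁻¹ * x^2) := fun x => by ring_nf
    simp_rw [this, integral_gaussian]
    rw [← Real.sqrt_inv]
    rw [← Real.sqrt_mul (by positivity)]
    norm_num
    rw [show Real.pi⁻¹ * (1/2) * (Real.pi/(1/2)) = 1 by field_simp]
  linarith

lemma Ioc_bound_upper {a b : ℝ} (h0 : 0 ≤ a) (hab : a ≤ b) :
    (∫ x in Ioc a b, stdNormalPDF x) ≤ (b - a) * stdNormalPDF a := by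
  have := setIntegral_mono_on (integrable_stdNormalPDF.integrableOn)
    (integrableOn_const (by simp [Real.volume_Ioc] : volume (Ioc a b) ≠ ⊤))
    measurableSet_Ioc (fun x hx => stdNormalPDF_anti h0 hx.1.le)
  calc (∫ x in Ioc a b, stdNormalPDF x) ≤ ∫ _x in Ioc a b, stdNormalPDF a := this
  _ = (b - a) * stdNormalPDF a := by
      rw [setIntegral_const, Real.volume_real_Ioc_of_le hab, smul_eq_mul]

lemma Ioc_bound_lower {a b : ℝ} (h0 : 0 ≤ a) (hab : a ≤ b) :
    (b - a) * stdNormalPDF b ≤ ∫ x in Ioc a b, stdNormalPDF x := by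
  have := setIntegral_mono_on
    (integrableOn_const (by simp [Real.volume_Ioc] : volume (Ioc a b) ≠ ⊤))
    (integrable_stdNormalPDF.integrableOn)
    measurableSet_Ioc (fun x hx => stdNormalPDF_anti (le_trans h0 hx.1.le) hx.2)
  have heq : (∫ _x in Ioc a b, stdNormalPDF b) = (b - a) * stdNormalPDF b := by
    rw [setIntegral_const, Real.volume_real_Ioc_of_le hab, smul_eq_mul]
  linarith [this, heq.le, heq.ge]

lemma tangent {t s : ℝ} (ht : 0 ≤ t) (hs : 0 ≤ s) :
    stdNormalTail (Real.sqrt t) - Real.sqrt t * stdNormalPDF (Real.sqrt t) / 2 * (s - 1)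
      ≤ stdNormalTail (Real.sqrt (t * s)) := by
  set a := Real.sqrt t with ha
  set b := Real.sqrt (t * s) with hb
  have ha0 : 0 ≤ a := Real.sqrt_nonneg t
  have hb0 : 0 ≤ b := Real.sqrt_nonneg _
  have hbs : b = a * Real.sqrt s := by rw [ha, hb, Real.sqrt_mul ht]
  have hss : Real.sqrt s ^ 2 = s := Real.sq_sqrt hs
  have hs0 : 0 ≤ Real.sqrt s := Real.sqrt_nonneg s
  have hpdf0 : 0 ≤ stdNormalPDF a := stdNormalPDF_nonneg a
  rcases le_total 1 s with h1 | h1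
  · -- s ≥ 1 : a ≤ b
    have hab : a ≤ b := by
      rw [hbs]; nlinarith [Real.one_le_sqrt.2 h1]
    have hsplit := stdNormalTail_split hab
    have hup := Ioc_bound_upper ha0 hab
    have hkey : (b - a) * stdNormalPDF a ≤ a * stdNormalPDF a / 2 * (s - 1) := by
      rw [hbs]
      have : Real.sqrt s - 1 ≤ (s - 1) / 2 := by nlinarith
      nlinarith [mul_le_mul_of_nonneg_left this (mul_nonneg ha0 hpdf0)]
    linarith
  · -- s ≤ 1 : b ≤ a
    have hab : b ≤ a := by
      rw [hbs]; nlinarith [Real.sqrt_le_one.mpr h1]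
      
    have hsplit := stdNormalTail_split hab
    have hlow := Ioc_bound_lower hb0 hab
    have hkey : a * stdNormalPDF a / 2 * (1 - s) ≤ (a - b) * stdNormalPDF a := by
      rw [hbs]
      have : (1 - s) / 2 ≤ 1 - Real.sqrt s := by nlinarith
      nlinarith [mul_le_mul_of_nonneg_left this (mul_nonneg ha0 hpdf0)]
    linarith

lemma sqrt_combo {s lam : ℝ} (hs : 0 ≤ s) (h0 : 0 ≤ lam) (h1 : lam ≤ 1) :
    lam * Real.sqrt s + (1 - lam) ≤ Real.sqrt (lam * s + (1 - lam)) := by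
  have hs0 : 0 ≤ Real.sqrt s := Real.sqrt_nonneg s
  have hss : Real.sqrt s ^ 2 = s := Real.sq_sqrt hs
  have hnn : 0 ≤ lam * Real.sqrt s + (1 - lam) := by nlinarith
  have h2 : (lam * Real.sqrt s + (1 - lam)) ^ 2 ≤ lam * s + (1 - lam) := by
    nlinarith [mul_nonneg (mul_nonneg h0 (by linarith : (0:ℝ) ≤ 1 - lam))
      (sq_nonneg (Real.sqrt s - 1))]
  calc lam * Real.sqrt s + (1 - lam) = Real.sqrt ((lam * Real.sqrt s + (1 - lam))^2) :=
        (Real.sqrt_sq hnn).symm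
  _ ≤ Real.sqrt (lam * s + (1 - lam)) := Real.sqrt_le_sqrt h2

lemma convexpt {t s lam : ℝ} (ht : 0 ≤ t) (hs : 0 ≤ s) (h0 : 0 ≤ lam) (h1 : lam ≤ 1) :
    stdNormalTail (Real.sqrt (t * (lam * s + (1 - lam))))
      ≤ lam * stdNormalTail (Real.sqrt (t * s)) + (1 - lam) * stdNormalTail (Real.sqrt t) := by
  set A := Real.sqrt t with hA
  set B := Real.sqrt (t * s) with hB
  set C := Real.sqrt (t * (lam * s + (1 - lam))) with hC
  have hA0 : 0 ≤ A := Real.sqrt_nonneg _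
  have hB0 : 0 ≤ B := Real.sqrt_nonneg _
  have hC0 : 0 ≤ C := Real.sqrt_nonneg _
  have hBs : B = A * Real.sqrt s := by rw [hB, hA, Real.sqrt_mul ht]
  have hCs : C = A * Real.sqrt (lam * s + (1 - lam)) := by rw [hC, hA, Real.sqrt_mul ht]
  have hcombo : lam * B + (1 - lam) * A ≤ C := by
    rw [hBs, hCs]
    have := sqrt_combo hs h0 h1
    nlinarith
  have hpdfC : 0 ≤ stdNormalPDF C := stdNormalPDF_nonneg C
  have hss : Real.sqrt s ^ 2 = s := Real.sq_sqrt hs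
  have hs0 : 0 ≤ Real.sqrt s := Real.sqrt_nonneg s
  rcases le_total 1 s with hcase | hcase
  · -- A ≤ C ≤ B
    have hsl : 1 ≤ lam * s + (1 - lam) := by nlinarith
    have hsl2 : lam * s + (1 - lam) ≤ s := by nlinarith
    have hAC : A ≤ C := by
      rw [hA, hC]; exact Real.sqrt_le_sqrt (by nlinarith)
    have hCB : C ≤ B := by
      rw [hC, hB]; exact Real.sqrt_le_sqrt (by nlinarith)
    have e1 := stdNormalTail_split hAC
    have e2 := stdNormalTail_split hCB
    have i1 : (C - A) * stdNormalPDF C ≤ ∫ x in Ioc A C, stdNormalPDF x :=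
      Ioc_bound_lower hA0 hAC
    have i2 : (∫ x in Ioc C B, stdNormalPDF x) ≤ (B - C) * stdNormalPDF C :=
      Ioc_bound_upper hC0 hCB
    have hkey : lam * ((B - C) * stdNormalPDF C) ≤ (1 - lam) * ((C - A) * stdNormalPDF C) := by
      nlinarith
    have p1 := mul_le_mul_of_nonneg_left i2 h0
    have p2 := mul_le_mul_of_nonneg_left i1 (by linarith : (0:ℝ) ≤ 1 - lam)
    have q1 : lam * stdNormalTail C
        = lam * (∫ x in Ioc C B, stdNormalPDF x) + lam * stdNormalTail B := by rw [e2]; ring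
    have q2 : (1 - lam) * stdNormalTail A
        = (1 - lam) * (∫ x in Ioc A C, stdNormalPDF x) + (1 - lam) * stdNormalTail C := by
      rw [e1]; ring
    linarith
  · -- B ≤ C ≤ A
    have hsl : lam * s + (1 - lam) ≤ 1 := by nlinarith
    have hsl2 : s ≤ lam * s + (1 - lam) := by nlinarith
    have hBC : B ≤ C := by
      rw [hB, hC]; exact Real.sqrt_le_sqrt (by nlinarith)
    have hCA : C ≤ A := by
      rw [hC, hA]
      have := Real.sqrt_le_sqrt (show t * (lam * s + (1 - lam)) ≤ t * 1 by nlinarith)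
      simpa using this
    have e1 := stdNormalTail_split hBC
    have e2 := stdNormalTail_split hCA
    have i1 : (C - B) * stdNormalPDF C ≤ ∫ x in Ioc B C, stdNormalPDF x :=
      Ioc_bound_lower hB0 hBC
    have i2 : (∫ x in Ioc C A, stdNormalPDF x) ≤ (A - C) * stdNormalPDF C :=
      Ioc_bound_upper hC0 hCA
    have hkey : (1 - lam) * ((A - C) * stdNormalPDF C) ≤ lam * ((C - B) * stdNormalPDF C) := by
      nlinarith
    have p1 := mul_le_mul_of_nonneg_left i2 (by linarith : (0:ℝ) ≤ 1 - lam)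
    have p2 := mul_le_mul_of_nonneg_left i1 h0
    have q1 : lam * stdNormalTail B
        = lam * (∫ x in Ioc B C, stdNormalPDF x) + lam * stdNormalTail C := by rw [e1]; ring
    have q2 : (1 - lam) * stdNormalTail C
        = (1 - lam) * (∫ x in Ioc C A, stdNormalPDF x) + (1 - lam) * stdNormalTail A := by
      rw [e2]; ring
    linarith

section Gauss
variable {v : ℝ}

lemma normalPDF_eq (hv : 0 < v) (x : ℝ) :
    normalPDF v x = (Real.sqrt v)⁻¹ * stdNormalPDF (x * (Real.sqrt v)⁻¹) := by
  unfold normalPDF stdNormalPDF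
  have h1 : Real.sqrt (2 * Real.pi * v) = Real.sqrt (2 * Real.pi) * Real.sqrt v :=
    Real.sqrt_mul (by positivity) v
  have h2 : (x * (Real.sqrt v)⁻¹) ^ 2 = x ^ 2 / v := by
    rw [mul_pow, ← Real.sqrt_inv, Real.sq_sqrt (by positivity)]
    field_simp
  rw [h1, h2, mul_inv]
  have : -(x ^ 2) / (2 * v) = -(x ^ 2 / v) / 2 := by ring
  rw [this]
  ring

lemma normalPDF_even (x : ℝ) : normalPDF v (-x) = normalPDF v x := by
  unfold normalPDF; rw [neg_pow]; ring_nf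

lemma normalPDF_nonneg (x : ℝ) : 0 ≤ normalPDF v x := by unfold normalPDF; positivity

lemma integrable_normalPDF (hv : 0 < v) : Integrable (normalPDF v) := by
  have h : Integrable (fun x : ℝ => (Real.sqrt v)⁻¹ * stdNormalPDF (x * (Real.sqrt v)⁻¹)) := by
    have hb : (Real.sqrt v)⁻¹ ≠ 0 := by positivity
    exact ((integrable_comp_mul_right_iff stdNormalPDF hb).2 integrable_stdNormalPDF).const_mul _
  exact h.congr (Filter.Eventually.of_forall fun x => (normalPDF_eq hv x).symm)

lemma gauss_tail (hv : 0 < v) (a : ℝ) :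
    ∫ x in Ioi a, normalPDF v x = stdNormalTail (a / Real.sqrt v) := by
  have hb : (0:ℝ) < (Real.sqrt v)⁻¹ := by positivity
  calc ∫ x in Ioi a, normalPDF v x
      = ∫ x in Ioi a, (Real.sqrt v)⁻¹ * stdNormalPDF (x * (Real.sqrt v)⁻¹) := by
        exact setIntegral_congr_fun measurableSet_Ioi fun x _ => normalPDF_eq hv x
  _ = (Real.sqrt v)⁻¹ * ∫ x in Ioi a, stdNormalPDF (x * (Real.sqrt v)⁻¹) := by
        rw [MeasureTheory.integral_const_mul]
  _ = (Real.sqrt v)⁻¹ * (((Real.sqrt v)⁻¹)⁻¹ • ∫ x in Ioi (a * (Real.sqrt v)⁻¹), stdNormalPDF x) := by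
        rw [integral_comp_mul_right_Ioi stdNormalPDF a hb]
  _ = stdNormalTail (a / Real.sqrt v) := by
        rw [smul_eq_mul, inv_inv, div_eq_mul_inv]
        unfold stdNormalTail
        field_simp

lemma gauss_ind (hv : 0 < v) {c : ℝ} (hc : 0 ≤ c) :
    ∫ x : ℝ, Set.indicator {x : ℝ | c ≤ x ^ 2} (fun _ => (1:ℝ)) x * normalPDF v x
      = 2 * stdNormalTail (Real.sqrt (c / v)) := by
  have hset : {x : ℝ | c ≤ x ^ 2} = Iic (-Real.sqrt c) ∪ Ici (Real.sqrt c) := by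
    ext x
    simp only [mem_setOf_eq, mem_union, mem_Iic, mem_Ici]
    constructor
    · intro h
      rcases le_total x 0 with hx | hx
      · left
        have : Real.sqrt c ≤ -x := by
          rw [show (-x) = Real.sqrt ((-x)^2) by rw [Real.sqrt_sq (by linarith)]]
          exact Real.sqrt_le_sqrt (by nlinarith)
        linarith
      · right
        rw [show x = Real.sqrt (x^2) by rw [Real.sqrt_sq hx]]
        exact Real.sqrt_le_sqrt (by nlinarith)
    · intro h
      rcases h with h | h
      · nlinarith [Real.sq_sqrt hc, Real.sqrt_nonneg c]
      · nlinarith [Real.sq_sqrt hc, Real.sqrt_nonneg c]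
  have hind : ∀ x : ℝ, Set.indicator {x : ℝ | c ≤ x ^ 2} (fun _ => (1:ℝ)) x * normalPDF v x
      = Set.indicator {x : ℝ | c ≤ x ^ 2} (normalPDF v) x := by
    intro x
    by_cases h : x ∈ {x : ℝ | c ≤ x ^ 2}
    · rw [Set.indicator_of_mem h, Set.indicator_of_mem h, one_mul]
    · rw [Set.indicator_of_notMem h, Set.indicator_of_notMem h, zero_mul]
  rw [MeasureTheory.integral_congr_ae (Filter.Eventually.of_forall hind)]
  rw [MeasureTheory.integral_indicator (by rw [hset]; exact measurableSet_Iic.union measurableSet_Ici)]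
  rw [hset]
  have hdisj : Disjoint (Iic (-Real.sqrt c)) (Ioi (Real.sqrt c)) := by
    apply Set.disjoint_left.2
    intro x hx hx'
    simp only [mem_Iic] at hx
    simp only [mem_Ioi] at hx'
    nlinarith [Real.sqrt_nonneg c]
  have hae : (Iic (-Real.sqrt c) ∪ Ici (Real.sqrt c) : Set ℝ) =ᵐ[volume]
      (Iic (-Real.sqrt c) ∪ Ioi (Real.sqrt c) : Set ℝ) := by
    have : (Ici (Real.sqrt c) : Set ℝ) =ᵐ[volume] (Ioi (Real.sqrt c) : Set ℝ) := Ioi_ae_eq_Ici.symm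
    exact Filter.EventuallyEq.union (Filter.EventuallyEq.refl _ _) this
  rw [MeasureTheory.setIntegral_congr_set hae]
  rw [MeasureTheory.setIntegral_union hdisj measurableSet_Ioi
    ((integrable_normalPDF hv).integrableOn) ((integrable_normalPDF hv).integrableOn)]
  have hneg : ∫ x in Iic (-Real.sqrt c), normalPDF v x = ∫ x in Ioi (Real.sqrt c), normalPDF v x := by
    rw [← integral_comp_neg_Ioi]
    exact setIntegral_congr_fun measurableSet_Ioi fun x _ => normalPDF_even x
  rw [hneg, gauss_tail hv]
  rw [show Real.sqrt c / Real.sqrt v = Real.sqrt (c / v) from (Real.sqrt_div hc v).symm]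
  ring
end Gauss

lemma chi2_nonneg (u : ℝ) : 0 ≤ chi2OverMPDF m u := by
  unfold chi2OverMPDF
  split_ifs with h
  · positivity
  · exact le_refl 0

lemma measurable_chi2 : Measurable (chi2OverMPDF m) := by
  unfold chi2OverMPDF
  refine Measurable.ite measurableSet_Ioi ?_ measurable_const
  apply Measurable.div
  · exact (measurable_const.mul ((((measurable_const.mul measurable_id').pow_const _).mul
      ((measurable_const.mul measurable_id').neg.div_const 2 |>.exp))))
  · exact measurable_const


lemma chi2_eq (hm : 1 ≤ m) {u : ℝ} (hu : 0 < u) :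
    chi2OverMPDF m u = ((m:ℝ)/2) ^ ((m:ℝ)/2) / Real.Gamma ((m:ℝ)/2) *
      (u ^ ((m:ℝ)/2 - 1) * Real.exp (-(((m:ℝ)/2) * u))) := by
  have hm0 : (0:ℝ) < m := by exact_mod_cast hm
  set k := (m:ℝ)/2 with hk
  have hk0 : 0 < k := by positivity
  unfold chi2OverMPDF
  rw [if_pos hu]
  have h1 : ((m:ℝ) * u) ^ (k - 1) = (m:ℝ) ^ (k - 1) * u ^ (k - 1) :=
    Real.mul_rpow hm0.le hu.le
  have h2 : (m:ℝ) * (m:ℝ) ^ (k - 1) = (m:ℝ) ^ k := by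
    nth_rewrite 1 [show (m:ℝ) = (m:ℝ) ^ (1:ℝ) from (Real.rpow_one _).symm]
    rw [← Real.rpow_add hm0]; norm_num
  have h3 : k ^ k = (m:ℝ) ^ k / 2 ^ k := by
    rw [hk, Real.div_rpow hm0.le (by norm_num : (0:ℝ) ≤ 2)]
  have h4 : Real.exp (-((m:ℝ) * u) / 2) = Real.exp (-(k * u)) := by
    congr 1; rw [hk]; ring
  have hG : Real.Gamma k ≠ 0 := (Real.Gamma_pos_of_pos hk0).ne'
  have h2k : (2:ℝ) ^ k ≠ 0 := (Real.rpow_pos_of_pos two_pos k).ne'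
  rw [h1, h4, h3, ← h2]
  field_simp
  ring
lemma integrableOn_rpow_exp {a r : ℝ} (ha : 0 < a) (hr : 0 < r) :
    IntegrableOn (fun t : ℝ => t ^ (a - 1) * Real.exp (-(r * t))) (Ioi 0) := by
  have h0 := Real.GammaIntegral_convergent ha
  have h1 : IntegrableOn (fun t : ℝ => Real.exp (-(r * t)) * (r * t) ^ (a - 1)) (Ioi 0) := by
    have := (integrableOn_Ioi_comp_mul_left_iff
      (fun x : ℝ => Real.exp (-x) * x ^ (a - 1)) 0 hr).2 (by rwa [mul_zero])
    exact this
  have h2 := h1.const_mul (r ^ ((1:ℝ) - a))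
  refine MeasureTheory.IntegrableOn.congr_fun h2 ?_ measurableSet_Ioi
  intro t ht
  have ht0 : (0:ℝ) < t := ht
  simp only []
  rw [Real.mul_rpow hr.le ht0.le]
  have : r ^ ((1:ℝ) - a) * r ^ (a - 1) = 1 := by
    rw [← Real.rpow_add hr]; norm_num
  calc r ^ ((1:ℝ) - a) * (Real.exp (-(r * t)) * (r ^ (a - 1) * t ^ (a - 1)))
      = (r ^ ((1:ℝ) - a) * r ^ (a - 1)) * (t ^ (a - 1) * Real.exp (-(r * t))) := by ring
  _ = t ^ (a - 1) * Real.exp (-(r * t)) := by rw [this, one_mul]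

lemma integrableOn_chi2 (hm : 1 ≤ m) : IntegrableOn (chi2OverMPDF m) (Ioi 0) := by
  have hm0 : (0:ℝ) < m := by exact_mod_cast hm
  have hk0 : (0:ℝ) < (m:ℝ)/2 := by positivity
  refine MeasureTheory.IntegrableOn.congr_fun
    ((integrableOn_rpow_exp hk0 hk0).const_mul (((m:ℝ)/2) ^ ((m:ℝ)/2) / Real.Gamma ((m:ℝ)/2)))
    ?_ measurableSet_Ioi
  intro u hu
  exact (chi2_eq hm hu).symm

lemma gamma_prod (hm : 1 ≤ m) :
    ((m:ℝ)/2) ^ ((m:ℝ)/2) / Real.Gamma ((m:ℝ)/2) *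
      (((1:ℝ)/((m:ℝ)/2)) ^ ((m:ℝ)/2) * Real.Gamma ((m:ℝ)/2)) = 1 := by
  have hm0 : (0:ℝ) < m := by exact_mod_cast hm
  set k := (m:ℝ)/2 with hk
  have hk0 : 0 < k := by positivity
  have hG : Real.Gamma k ≠ 0 := (Real.Gamma_pos_of_pos hk0).ne'
  have h5 : ((1:ℝ)/k) ^ k * k ^ k = 1 := by
    rw [← Real.mul_rpow (by positivity) hk0.le, one_div_mul_cancel hk0.ne', Real.one_rpow]
  calc k ^ k / Real.Gamma k * (((1:ℝ)/k) ^ k * Real.Gamma k)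
      = ((1:ℝ)/k) ^ k * k ^ k * (Real.Gamma k / Real.Gamma k) := by ring
  _ = 1 := by rw [h5, div_self hG, one_mul]

lemma integral_chi2 (hm : 1 ≤ m) : ∫ u in Ioi (0:ℝ), chi2OverMPDF m u = 1 := by
  have hm0 : (0:ℝ) < m := by exact_mod_cast hm
  set k := (m:ℝ)/2 with hk
  have hk0 : 0 < k := by positivity
  calc ∫ u in Ioi (0:ℝ), chi2OverMPDF m u
      = ∫ u in Ioi (0:ℝ), k ^ k / Real.Gamma k * (u ^ (k - 1) * Real.exp (-(k * u))) :=
        setIntegral_congr_fun measurableSet_Ioi fun u hu => chi2_eq hm hu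
  _ = k ^ k / Real.Gamma k * (((1:ℝ)/k) ^ k * Real.Gamma k) := by
        rw [MeasureTheory.integral_const_mul, Real.integral_rpow_mul_exp_neg_mul_Ioi hk0 hk0]
  _ = 1 := gamma_prod hm

lemma integrableOn_chi2_mul (hm : 1 ≤ m) :
    IntegrableOn (fun u => u * chi2OverMPDF m u) (Ioi 0) := by
  have hm0 : (0:ℝ) < m := by exact_mod_cast hm
  set k := (m:ℝ)/2 with hk
  have hk0 : 0 < k := by positivity
  have hk1 : 0 < k + 1 := by positivity
  refine MeasureTheory.IntegrableOn.congr_fun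
    ((integrableOn_rpow_exp hk1 hk0).const_mul (k ^ k / Real.Gamma k)) ?_ measurableSet_Ioi
  intro u hu
  have hu0 : (0:ℝ) < u := hu
  simp only []
  rw [chi2_eq hm hu0, show k + 1 - 1 = 1 + (k - 1) by ring, Real.rpow_add hu0, Real.rpow_one]
  ring

lemma integral_chi2_mul (hm : 1 ≤ m) : ∫ u in Ioi (0:ℝ), u * chi2OverMPDF m u = 1 := by
  have hm0 : (0:ℝ) < m := by exact_mod_cast hm
  set k := (m:ℝ)/2 with hk
  have hk0 : 0 < k := by positivity
  have hk1 : 0 < k + 1 := by positivity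
  have hG : Real.Gamma k ≠ 0 := (Real.Gamma_pos_of_pos hk0).ne'
  have h5 : ((1:ℝ)/k) ^ k * k ^ k = 1 := by
    rw [← Real.mul_rpow (by positivity) hk0.le, one_div_mul_cancel hk0.ne', Real.one_rpow]
  calc ∫ u in Ioi (0:ℝ), u * chi2OverMPDF m u
      = ∫ u in Ioi (0:ℝ), k ^ k / Real.Gamma k * (u ^ (k + 1 - 1) * Real.exp (-(k * u))) := by
        refine setIntegral_congr_fun measurableSet_Ioi fun u hu => ?_
        have hu0 : (0:ℝ) < u := hu
        rw [chi2_eq hm hu0, show k + 1 - 1 = 1 + (k - 1) by ring, Real.rpow_add hu0,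
          Real.rpow_one]
        ring
  _ = k ^ k / Real.Gamma k * (((1:ℝ)/k) ^ (k+1) * Real.Gamma (k+1)) := by
        rw [MeasureTheory.integral_const_mul, Real.integral_rpow_mul_exp_neg_mul_Ioi hk1 hk0]
  _ = 1 := by
        rw [Real.Gamma_add_one hk0.ne', Real.rpow_add (by positivity : (0:ℝ) < 1/k),
          Real.rpow_one]
        calc k ^ k / Real.Gamma k * (((1:ℝ)/k) ^ k * ((1:ℝ)/k) * (k * Real.Gamma k))
            = ((1:ℝ)/k) ^ k * k ^ k * (((1:ℝ)/k) * k) * (Real.Gamma k / Real.Gamma k) := by ring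
        _ = 1 := by rw [h5, one_div_mul_cancel hk0.ne', div_self hG]; norm_num

lemma continuous_stdNormalPDF : Continuous stdNormalPDF := by
  unfold stdNormalPDF; fun_prop

lemma E1 {t u : ℝ} (ht : 0 ≤ t) (hu : 0 < u) :
    stdNormalTail (Real.sqrt (t * u)) =
      ∫ s in Ioi (Real.sqrt t), Real.sqrt u * stdNormalPDF (s * Real.sqrt u) := by
  have hsu : (0:ℝ) < Real.sqrt u := Real.sqrt_pos.2 hu
  rw [MeasureTheory.integral_const_mul,
    integral_comp_mul_right_Ioi stdNormalPDF (Real.sqrt t) hsu, smul_eq_mul,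
    ← mul_assoc, mul_inv_cancel₀ hsu.ne', one_mul, ← Real.sqrt_mul ht]
  rfl


lemma inner_identity (hm : 1 ≤ m) (s : ℝ) :
    ∫ u in Ioi (0:ℝ), chi2OverMPDF m u * (2 * (Real.sqrt u * stdNormalPDF (s * Real.sqrt u)))
      = 2 * tPDF m s := by
  have hm0 : (0:ℝ) < m := by exact_mod_cast hm
  set k := (m:ℝ)/2 with hk
  have hk0 : 0 < k := by positivity
  set a := k + 1/2 with hadef
  set r := k + s^2/2 with hrdef
  have ha0 : 0 < a := by positivity
  have hr0 : 0 < r := by positivity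
  have hG : Real.Gamma k ≠ 0 := (Real.Gamma_pos_of_pos hk0).ne'
  have step1 : ∀ u ∈ Ioi (0:ℝ),
      chi2OverMPDF m u * (2 * (Real.sqrt u * stdNormalPDF (s * Real.sqrt u)))
        = (2 * (k ^ k / (Real.Gamma k * Real.sqrt (2 * Real.pi))))
            * (u ^ (a - 1) * Real.exp (-(r * u))) := by
    intro u hu
    have hu0 : (0:ℝ) < u := hu
    rw [chi2_eq hm hu0]
    unfold stdNormalPDF
    have h1 : (s * Real.sqrt u) ^ 2 = s ^ 2 * u := by
      rw [mul_pow, Real.sq_sqrt hu0.le]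
    have h2 : Real.sqrt u = u ^ ((1:ℝ)/2) := Real.sqrt_eq_rpow u
    have h3 : u ^ (k - 1) * u ^ ((1:ℝ)/2) = u ^ (a - 1) := by
      rw [← Real.rpow_add hu0]; try (congr 1 <;> ring)
    have h4 : Real.exp (-(k * u)) * Real.exp (-((s * Real.sqrt u) ^ 2) / 2)
        = Real.exp (-(r * u)) := by
      rw [h1, ← Real.exp_add]; try (congr 1 <;> ring)
    calc k ^ k / Real.Gamma k * (u ^ (k - 1) * Real.exp (-(k * u))) *
          (2 * (Real.sqrt u * ((Real.sqrt (2 * Real.pi))⁻¹ *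
            Real.exp (-((s * Real.sqrt u) ^ 2) / 2))))
        = (2 * (k ^ k / (Real.Gamma k * Real.sqrt (2 * Real.pi))))
            * ((u ^ (k - 1) * u ^ ((1:ℝ)/2)) *
              (Real.exp (-(k * u)) * Real.exp (-((s * Real.sqrt u) ^ 2) / 2))) := by
          rw [h2]; field_simp
    _ = (2 * (k ^ k / (Real.Gamma k * Real.sqrt (2 * Real.pi))))
            * (u ^ (a - 1) * Real.exp (-(r * u))) := by rw [h3, h4]
  rw [setIntegral_congr_fun measurableSet_Ioi step1, MeasureTheory.integral_const_mul,
    Real.integral_rpow_mul_exp_neg_mul_Ioi ha0 hr0]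
  -- now pure algebra
  have key : k ^ k / (Real.Gamma k * Real.sqrt (2 * Real.pi)) * ((1 / r) ^ a * Real.Gamma a)
      = tPDF m s := by
    unfold tPDF
    have hma : ((m:ℝ) + 1) / 2 = a := by rw [hadef, hk]; ring
    rw [hma]
    have h6 : 1 + s ^ 2 / m = 2 * r / m := by rw [hrdef, hk]; field_simp; try ring
    rw [h6]
    have h7 : (2 * r / (m:ℝ)) ^ (-a) = ((m:ℝ) / (2 * r)) ^ a := by
      rw [Real.rpow_neg (by positivity), ← Real.inv_rpow (by positivity), inv_div]
    rw [h7]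
    have h8 : ((m:ℝ) / (2 * r)) ^ a = (m:ℝ) ^ a / ((2:ℝ) ^ a * r ^ a) := by
      rw [Real.div_rpow hm0.le (by positivity), Real.mul_rpow (by norm_num) hr0.le]
    have h9 : ((1:ℝ) / r) ^ a = 1 / r ^ a := by
      rw [Real.div_rpow (by norm_num) hr0.le, Real.one_rpow]
      
    rw [h8, h9]
    have h10 : (m:ℝ) ^ a = (m:ℝ) ^ k * (m:ℝ) ^ ((1:ℝ)/2) := by
      rw [← Real.rpow_add hm0]; try (congr 1 <;> ring)
    have h11 : (2:ℝ) ^ a = (2:ℝ) ^ k * (2:ℝ) ^ ((1:ℝ)/2) := by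
      rw [← Real.rpow_add (by norm_num : (0:ℝ) < 2)]; try (congr 1 <;> ring)
    have h12 : k ^ k = (m:ℝ) ^ k / (2:ℝ) ^ k := by
      rw [hk, Real.div_rpow hm0.le (by norm_num)]
    have h13 : Real.sqrt (Real.pi * m) = Real.sqrt Real.pi * (m:ℝ) ^ ((1:ℝ)/2) := by
      rw [Real.sqrt_mul Real.pi_pos.le, Real.sqrt_eq_rpow (m:ℝ)]
    have h14 : Real.sqrt (2 * Real.pi) = (2:ℝ) ^ ((1:ℝ)/2) * Real.sqrt Real.pi := by
      rw [Real.sqrt_mul (by norm_num : (0:ℝ) ≤ 2),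
        Real.sqrt_eq_rpow (2:ℝ)]
    rw [h10, h11, h12, h13, h14]
    have hGa : Real.Gamma a ≠ 0 := (Real.Gamma_pos_of_pos ha0).ne'
    have hra : r ^ a ≠ 0 := (Real.rpow_pos_of_pos hr0 a).ne'
    have h2k : (2:ℝ) ^ k ≠ 0 := (Real.rpow_pos_of_pos (by norm_num) k).ne'
    have h2h : (2:ℝ) ^ ((1:ℝ)/2) ≠ 0 := (Real.rpow_pos_of_pos (by norm_num) _).ne'
    have hmk : (m:ℝ) ^ k ≠ 0 := (Real.rpow_pos_of_pos hm0 k).ne'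
    have hmh : (m:ℝ) ^ ((1:ℝ)/2) ≠ 0 := (Real.rpow_pos_of_pos hm0 _).ne'
    have hsp : Real.sqrt Real.pi ≠ 0 := (Real.sqrt_pos.2 Real.pi_pos).ne'
    field_simp
    ring
  rw [← key]; ring

lemma mix {m : ℕ} {t : ℝ} (hm : 1 ≤ m) (ht : 0 ≤ t) :
    ∫ u in Ioi (0:ℝ), chi2OverMPDF m u * (2 * stdNormalTail (Real.sqrt (t * u)))
      = 2 * tTail m (Real.sqrt t) := by
  set G : ℝ → ℝ → ℝ :=
    fun u s => chi2OverMPDF m u * (2 * (Real.sqrt u * stdNormalPDF (s * Real.sqrt u))) with hG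
  have hmeas : AEStronglyMeasurable (Function.uncurry G)
      ((volume.restrict (Ioi (0:ℝ))).prod (volume.restrict (Ioi (Real.sqrt t)))) := by
    have m1 : Measurable fun p : ℝ × ℝ => chi2OverMPDF m p.1 := measurable_chi2.comp measurable_fst
    have m2 : Measurable fun p : ℝ × ℝ => Real.sqrt p.1 :=
      Real.continuous_sqrt.measurable.comp measurable_fst
    have m3 : Measurable fun p : ℝ × ℝ => stdNormalPDF (p.2 * Real.sqrt p.1) :=
      continuous_stdNormalPDF.measurable.comp (measurable_snd.mul m2)
    exact (m1.mul (measurable_const.mul (m2.mul m3))).aestronglyMeasurable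
  have hInt : Integrable (Function.uncurry G)
      ((volume.restrict (Ioi (0:ℝ))).prod (volume.restrict (Ioi (Real.sqrt t)))) := by
    rw [MeasureTheory.integrable_prod_iff hmeas]
    constructor
    · filter_upwards [ae_restrict_mem measurableSet_Ioi] with u hu
      have hu0 : (0:ℝ) < u := hu
      have hI : Integrable (fun s : ℝ => stdNormalPDF (s * Real.sqrt u)) :=
        (integrable_comp_mul_right_iff stdNormalPDF (Real.sqrt_pos.2 hu0).ne').2
          integrable_stdNormalPDF
      exact ((hI.restrict (s := Ioi (Real.sqrt t))).const_mul
        (chi2OverMPDF m u * (2 * Real.sqrt u))).congr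
        (Filter.Eventually.of_forall fun s => by simp only [hG, Function.uncurry_apply_pair]; ring)
    · apply Integrable.mono' ((integrableOn_chi2 (m := m) hm).mul_const 2)
      · exact hmeas.norm.integral_prod_right'
      · filter_upwards [ae_restrict_mem measurableSet_Ioi] with u hu
        have hu0 : (0:ℝ) < u := hu
        simp only [Function.uncurry_apply_pair]
        have hnn : ∀ s : ℝ, 0 ≤ G u s := fun s => by
          have := stdNormalPDF_nonneg (s * Real.sqrt u)
          have := chi2_nonneg (m := m) u
          have := Real.sqrt_nonneg u
          positivity
        have heq : ∫ s in Ioi (Real.sqrt t), ‖G u s‖ = ∫ s in Ioi (Real.sqrt t), G u s :=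
          setIntegral_congr_fun measurableSet_Ioi fun s _ => Real.norm_of_nonneg (hnn s)
        have hval : ∫ s in Ioi (Real.sqrt t), G u s
            = chi2OverMPDF m u * (2 * stdNormalTail (Real.sqrt (t * u))) := by
          rw [hG]
          rw [MeasureTheory.integral_const_mul, MeasureTheory.integral_const_mul,
            ← E1 ht hu0]
        have hpos : (0:ℝ) ≤ ∫ s in Ioi (Real.sqrt t), ‖G u s‖ :=
          MeasureTheory.integral_nonneg fun s => norm_nonneg _
        rw [Real.norm_of_nonneg hpos, heq, hval]
        have h1 := stdNormalTail_le_one (Real.sqrt (t * u))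
        have h2 := stdNormalTail_nonneg (Real.sqrt (t * u))
        have h3 := chi2_nonneg (m := m) u
        nlinarith
  calc ∫ u in Ioi (0:ℝ), chi2OverMPDF m u * (2 * stdNormalTail (Real.sqrt (t * u)))
      = ∫ u in Ioi (0:ℝ), ∫ s in Ioi (Real.sqrt t), G u s := by
        refine setIntegral_congr_fun measurableSet_Ioi fun u hu => ?_
        have hu0 : (0:ℝ) < u := hu
        rw [hG]
        rw [MeasureTheory.integral_const_mul, MeasureTheory.integral_const_mul, ← E1 ht hu0]
  _ = ∫ s in Ioi (Real.sqrt t), ∫ u in Ioi (0:ℝ), G u s := by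
        exact MeasureTheory.integral_integral_swap hInt
  _ = ∫ s in Ioi (Real.sqrt t), 2 * tPDF m s := by
        exact setIntegral_congr_fun measurableSet_Ioi fun s _ => inner_identity hm s
  _ = 2 * tTail m (Real.sqrt t) := by
        rw [MeasureTheory.integral_const_mul]; rfl

lemma continuous_normalPDF {v : ℝ} : Continuous (normalPDF v) := by
  unfold normalPDF; fun_prop

lemma measurable_stdNormalTail : Measurable stdNormalTail := stdNormalTail_anti.measurable

lemma integrableOn_chi2_mul_tail {m : ℕ} (hm : 1 ≤ m) {w : ℝ → ℝ} (hw : Measurable w) :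
    IntegrableOn (fun u => chi2OverMPDF m u * (2 * stdNormalTail (w u))) (Ioi 0) := by
  apply Integrable.mono' ((integrableOn_chi2 (m := m) hm).mul_const 2)
  · exact (measurable_chi2.mul
      ((measurable_stdNormalTail.comp hw).const_mul 2)).aestronglyMeasurable
  · refine Filter.Eventually.of_forall fun u => ?_
    have h1 := stdNormalTail_le_one (w u)
    have h2 := stdNormalTail_nonneg (w u)
    have h3 := chi2_nonneg (m := m) u
    rw [Real.norm_of_nonneg (by positivity)]
    nlinarith

lemma welch_eq {m : ℕ} {τ2 σ2 t : ℝ} (hm : 1 ≤ m) (hτ : 0 ≤ τ2) (hσ : 0 < σ2) (ht : 0 ≤ t) :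
    welchTail m τ2 σ2 t = ∫ u in Ioi (0:ℝ), chi2OverMPDF m u *
      (2 * stdNormalTail (Real.sqrt (t * ((τ2 + σ2 * u) / (τ2 + σ2))))) := by
  set v := τ2 + σ2 with hv
  have hv0 : 0 < v := by positivity
  set S : Set (ℝ × ℝ) := {p : ℝ × ℝ | t ≤ p.1 ^ 2 / (τ2 + p.2)} with hS
  have hSmeas : MeasurableSet S := by
    apply measurableSet_le measurable_const
    exact (measurable_fst.pow_const 2).div (measurable_const.add measurable_snd)
  set F : ℝ → ℝ → ℝ := fun x y => Set.indicator S (fun _ => (1:ℝ)) (x, y) *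
      normalPDF v x * (σ2⁻¹ * chi2OverMPDF m (y / σ2)) with hF
  have hchi_int : Integrable (fun y => σ2⁻¹ * chi2OverMPDF m (y / σ2))
      (volume.restrict (Ioi (0:ℝ))) := by
    have h1 : IntegrableOn (fun y => chi2OverMPDF m (y * σ2⁻¹)) (Ioi (0:ℝ)) := by
      have := (integrableOn_Ioi_comp_mul_right_iff (chi2OverMPDF m) 0 (inv_pos.2 hσ)).2
      rw [zero_mul] at this
      exact this (integrableOn_chi2 hm)
    have h2 := h1.const_mul σ2⁻¹
    exact h2.congr (Filter.Eventually.of_forall fun y => by simp only [div_eq_mul_inv])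
  have hmeasF : AEStronglyMeasurable (Function.uncurry F)
      (volume.prod (volume.restrict (Ioi (0:ℝ)))) := by
    have m1 : Measurable (Set.indicator S (fun _ => (1:ℝ))) :=
      measurable_const.indicator hSmeas
    have m2 : Measurable fun p : ℝ × ℝ => normalPDF v p.1 :=
      continuous_normalPDF.measurable.comp measurable_fst
    have m3 : Measurable fun p : ℝ × ℝ => σ2⁻¹ * chi2OverMPDF m (p.2 / σ2) :=
      (measurable_chi2.comp (measurable_snd.div_const σ2)).const_mul σ2⁻¹
    exact ((m1.mul m2).mul m3).aestronglyMeasurable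
  have hIntF : Integrable (Function.uncurry F)
      (volume.prod (volume.restrict (Ioi (0:ℝ)))) := by
    apply Integrable.mono'
      (MeasureTheory.Integrable.mul_prod (integrable_normalPDF hv0) hchi_int)
    · exact hmeasF
    · refine Filter.Eventually.of_forall fun p => ?_
      have h1 : Set.indicator S (fun _ => (1:ℝ)) p ≤ 1 := Set.indicator_le_self' (by simp) p
      have h1' : 0 ≤ Set.indicator S (fun _ => (1:ℝ)) p := Set.indicator_nonneg (by simp) p
      have h2 : 0 ≤ normalPDF v p.1 := normalPDF_nonneg p.1
      have h3 : 0 ≤ σ2⁻¹ * chi2OverMPDF m (p.2 / σ2) := by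
        have := chi2_nonneg (m := m) (p.2 / σ2); positivity
      have : Function.uncurry F p = Set.indicator S (fun _ => (1:ℝ)) p *
          normalPDF v p.1 * (σ2⁻¹ * chi2OverMPDF m (p.2 / σ2)) := rfl
      rw [Real.norm_of_nonneg (by rw [this]; positivity), this]
      nlinarith [mul_le_mul_of_nonneg_right (mul_le_mul_of_nonneg_right h1 h2) h3]
  have hswap : welchTail m τ2 σ2 t = ∫ y in Ioi (0:ℝ), ∫ x : ℝ, F x y := by
    unfold welchTail
    exact MeasureTheory.integral_integral_swap hIntF
  have hinner : ∀ y ∈ Ioi (0:ℝ), (∫ x : ℝ, F x y)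
      = σ2⁻¹ * chi2OverMPDF m (y / σ2) *
        (2 * stdNormalTail (Real.sqrt (t * ((τ2 + y) / v)))) := by
    intro y hy
    have hy0 : (0:ℝ) < y := hy
    have hty : 0 < τ2 + y := by linarith
    have hsec : ∀ x : ℝ, Set.indicator S (fun _ => (1:ℝ)) (x, y)
        = Set.indicator {x : ℝ | t * (τ2 + y) ≤ x ^ 2} (fun _ => (1:ℝ)) x := by
      intro x
      have : (x, y) ∈ S ↔ x ∈ {x : ℝ | t * (τ2 + y) ≤ x ^ 2} := by
        rw [hS]; simp only [mem_setOf_eq]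
        rw [le_div_iff₀ hty]
      by_cases h : (x, y) ∈ S
      · rw [Set.indicator_of_mem h, Set.indicator_of_mem (this.1 h)]
      · rw [Set.indicator_of_notMem h, Set.indicator_of_notMem (fun hc => h (this.2 hc))]
    calc ∫ x : ℝ, F x y
        = ∫ x : ℝ, (σ2⁻¹ * chi2OverMPDF m (y / σ2)) *
            (Set.indicator {x : ℝ | t * (τ2 + y) ≤ x ^ 2} (fun _ => (1:ℝ)) x * normalPDF v x) := by
          refine integral_congr_ae (Filter.Eventually.of_forall fun x => ?_)
          rw [hF]; simp only []; rw [hsec x]; ring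
    _ = (σ2⁻¹ * chi2OverMPDF m (y / σ2)) *
          (2 * stdNormalTail (Real.sqrt ((t * (τ2 + y)) / v))) := by
          rw [MeasureTheory.integral_const_mul, gauss_ind hv0 (by positivity)]
    _ = σ2⁻¹ * chi2OverMPDF m (y / σ2) *
          (2 * stdNormalTail (Real.sqrt (t * ((τ2 + y) / v)))) := by
          rw [mul_div_assoc]
  rw [hswap, setIntegral_congr_fun measurableSet_Ioi hinner]
  -- change of variables y = σ2 * u
  set g : ℝ → ℝ := fun u => chi2OverMPDF m u *
      (2 * stdNormalTail (Real.sqrt (t * ((τ2 + σ2 * u) / v)))) with hg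
  have hcomp : ∀ y ∈ Ioi (0:ℝ), σ2⁻¹ * chi2OverMPDF m (y / σ2) *
      (2 * stdNormalTail (Real.sqrt (t * ((τ2 + y) / v)))) = σ2⁻¹ * g (y * σ2⁻¹) := by
    intro y hy
    rw [hg]
    simp only []
    rw [div_eq_mul_inv]
    have : σ2 * (y * σ2⁻¹) = y := by field_simp
    rw [this]
    ring
  rw [setIntegral_congr_fun measurableSet_Ioi hcomp, MeasureTheory.integral_const_mul,
    integral_comp_mul_right_Ioi g 0 (inv_pos.2 hσ), zero_mul, smul_eq_mul, inv_inv,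
    ← mul_assoc, inv_mul_cancel₀ hσ.ne', one_mul]

/-- The Welch-type tail is sandwiched between the squared-normal tail and the squared-t tail. -/
theorem stmt_2 (m : ℕ) (hm : 1 ≤ m) (τ2 σ2 : ℝ) (hτ : 0 ≤ τ2) (hσ : 0 < σ2)
    (t : ℝ) (ht : 0 ≤ t) :
    2 * stdNormalTail (Real.sqrt t) ≤ welchTail m τ2 σ2 t ∧
      welchTail m τ2 σ2 t ≤ 2 * tTail m (Real.sqrt t) := by
  set v := τ2 + σ2 with hv
  have hv0 : 0 < v := by positivity
  set lam := σ2 / v with hlam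
  have hlam0 : 0 < lam := by positivity
  have hlam1 : lam ≤ 1 := by rw [hlam, div_le_one hv0]; linarith
  set K := Real.sqrt t * stdNormalPDF (Real.sqrt t) with hK
  set T := stdNormalTail (Real.sqrt t) with hT
  have hq : ∀ u : ℝ, (τ2 + σ2 * u) / v = lam * u + (1 - lam) := by
    intro u; rw [hlam, hv]; field_simp; ring
  have hqmeas : Measurable fun u : ℝ => Real.sqrt (t * ((τ2 + σ2 * u) / v)) := by fun_prop
  have hwelch := welch_eq (τ2 := τ2) (σ2 := σ2) (t := t) hm hτ hσ ht
  have hImain : IntegrableOn (fun u => chi2OverMPDF m u *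
      (2 * stdNormalTail (Real.sqrt (t * ((τ2 + σ2 * u) / v))))) (Ioi 0) :=
    integrableOn_chi2_mul_tail hm hqmeas
  have hItu : IntegrableOn (fun u => chi2OverMPDF m u *
      (2 * stdNormalTail (Real.sqrt (t * u)))) (Ioi 0) :=
    integrableOn_chi2_mul_tail hm (by fun_prop)
  have h2 : IntegrableOn (fun u => chi2OverMPDF m u * (u - 1)) (Ioi 0) := by
    have := (integrableOn_chi2_mul (m := m) hm).sub (integrableOn_chi2 (m := m) hm)
    exact MeasureTheory.IntegrableOn.congr_fun this (fun u _ => by simp only [Pi.sub_apply]; ring) measurableSet_Ioi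
  have e0 : (∫ u in Ioi (0:ℝ), chi2OverMPDF m u * (u - 1)) = 0 := by
    have : (∫ u in Ioi (0:ℝ), chi2OverMPDF m u * (u - 1))
        = (∫ u in Ioi (0:ℝ), (u * chi2OverMPDF m u - chi2OverMPDF m u)) :=
      setIntegral_congr_fun measurableSet_Ioi fun u _ => by ring
    rw [this, MeasureTheory.integral_sub (integrableOn_chi2_mul hm) (integrableOn_chi2 hm),
      integral_chi2 hm, integral_chi2_mul hm]
    ring
  have hc2T : (∫ u in Ioi (0:ℝ), chi2OverMPDF m u * (2 * T)) = 2 * T := by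
    rw [MeasureTheory.integral_mul_const, integral_chi2 hm, one_mul]
  have hIlin : ∀ c : ℝ, IntegrableOn (fun u => chi2OverMPDF m u * (2 * T)
      - K * c * (chi2OverMPDF m u * (u - 1))) (Ioi 0) := by
    intro c
    exact ((integrableOn_chi2 (m := m) hm).mul_const (2 * T)).sub
      (MeasureTheory.IntegrableOn.congr_fun (h2.const_mul (K * c))
        (fun u _ => by ring) measurableSet_Ioi)
  have hlin_val : ∀ c : ℝ, (∫ u in Ioi (0:ℝ), (chi2OverMPDF m u * (2 * T)
      - K * c * (chi2OverMPDF m u * (u - 1)))) = 2 * T := by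
    intro c
    rw [MeasureTheory.integral_sub ((integrableOn_chi2 (m := m) hm).mul_const (2 * T))
        (MeasureTheory.IntegrableOn.congr_fun (h2.const_mul (K * c))
        (fun u _ => by ring) measurableSet_Ioi)]
    have h3 : (∫ u in Ioi (0:ℝ), K * c * (chi2OverMPDF m u * (u - 1)))
        = K * c * ∫ u in Ioi (0:ℝ), chi2OverMPDF m u * (u - 1) :=
      MeasureTheory.integral_const_mul _ _
    rw [h3, e0, hc2T]
    ring
  have hpt_tan : ∀ s : ℝ, 0 ≤ s → ∀ u : ℝ,
      chi2OverMPDF m u * (2 * T) - K * (chi2OverMPDF m u * (s - 1))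
        ≤ chi2OverMPDF m u * (2 * stdNormalTail (Real.sqrt (t * s))) := by
    intro s hs u
    have h := tangent (t := t) (s := s) ht hs
    rw [← hK, ← hT] at h
    have hc := chi2_nonneg (m := m) u
    have h' := mul_le_mul_of_nonneg_left h hc
    calc chi2OverMPDF m u * (2 * T) - K * (chi2OverMPDF m u * (s - 1))
        = 2 * (chi2OverMPDF m u * (T - K / 2 * (s - 1))) := by ring
    _ ≤ 2 * (chi2OverMPDF m u * stdNormalTail (Real.sqrt (t * s))) := by linarith
    _ = chi2OverMPDF m u * (2 * stdNormalTail (Real.sqrt (t * s))) := by ring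
  constructor
  · -- lower bound
    rw [hwelch]
    have hpt : ∀ u ∈ Ioi (0:ℝ),
        chi2OverMPDF m u * (2 * T) - K * lam * (chi2OverMPDF m u * (u - 1))
          ≤ chi2OverMPDF m u * (2 * stdNormalTail (Real.sqrt (t * ((τ2 + σ2 * u) / v)))) := by
      intro u hu
      have hu0 : (0:ℝ) < u := hu
      have hs0 : 0 ≤ (τ2 + σ2 * u) / v := by positivity
      have h := hpt_tan _ hs0 u
      have hrw : (τ2 + σ2 * u) / v - 1 = lam * (u - 1) := by rw [hq u]; ring
      calc chi2OverMPDF m u * (2 * T) - K * lam * (chi2OverMPDF m u * (u - 1))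
          = chi2OverMPDF m u * (2 * T)
            - K * (chi2OverMPDF m u * ((τ2 + σ2 * u) / v - 1)) := by rw [hrw]; ring
      _ ≤ _ := h
    calc 2 * T = ∫ u in Ioi (0:ℝ), (chi2OverMPDF m u * (2 * T)
        - K * lam * (chi2OverMPDF m u * (u - 1))) := (hlin_val lam).symm
    _ ≤ _ := setIntegral_mono_on (hIlin lam) hImain measurableSet_Ioi hpt
  · -- upper bound
    rw [← mix (t := t) hm ht]
    set A := ∫ u in Ioi (0:ℝ), chi2OverMPDF m u * (2 * stdNormalTail (Real.sqrt (t * u)))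
      with hA
    have hTA : 2 * T ≤ A := by
      have hpt : ∀ u ∈ Ioi (0:ℝ),
          chi2OverMPDF m u * (2 * T) - K * 1 * (chi2OverMPDF m u * (u - 1))
            ≤ chi2OverMPDF m u * (2 * stdNormalTail (Real.sqrt (t * u))) := by
        intro u hu
        have hu0 : (0:ℝ) < u := hu
        have h := hpt_tan u hu0.le u
        calc chi2OverMPDF m u * (2 * T) - K * 1 * (chi2OverMPDF m u * (u - 1))
            = chi2OverMPDF m u * (2 * T) - K * (chi2OverMPDF m u * (u - 1)) := by ring
        _ ≤ _ := h
      calc 2 * T = _ := (hlin_val 1).symm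
      _ ≤ A := setIntegral_mono_on (hIlin 1) hItu measurableSet_Ioi hpt
    have hconv : ∀ u ∈ Ioi (0:ℝ),
        chi2OverMPDF m u * (2 * stdNormalTail (Real.sqrt (t * ((τ2 + σ2 * u) / v))))
          ≤ lam * (chi2OverMPDF m u * (2 * stdNormalTail (Real.sqrt (t * u))))
            + (1 - lam) * (chi2OverMPDF m u * (2 * T)) := by
      intro u hu
      have hu0 : (0:ℝ) < u := hu
      have h := convexpt (t := t) (s := u) (lam := lam) ht hu0.le hlam0.le hlam1
      rw [← hT] at h
      have hc := chi2_nonneg (m := m) u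
      rw [hq u]
      have h' := mul_le_mul_of_nonneg_left h hc
      calc chi2OverMPDF m u * (2 * stdNormalTail (Real.sqrt (t * (lam * u + (1 - lam)))))
          = 2 * (chi2OverMPDF m u * stdNormalTail (Real.sqrt (t * (lam * u + (1 - lam))))) := by
            ring
      _ ≤ 2 * (chi2OverMPDF m u * (lam * stdNormalTail (Real.sqrt (t * u)) + (1 - lam) * T)) := by
            linarith
      _ = lam * (chi2OverMPDF m u * (2 * stdNormalTail (Real.sqrt (t * u))))
            + (1 - lam) * (chi2OverMPDF m u * (2 * T)) := by ring
    have hIrhs : IntegrableOn (fun u =>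
        lam * (chi2OverMPDF m u * (2 * stdNormalTail (Real.sqrt (t * u))))
          + (1 - lam) * (chi2OverMPDF m u * (2 * T))) (Ioi 0) :=
      (hItu.const_mul lam).add (((integrableOn_chi2 (m := m) hm).mul_const
        (2 * T)).const_mul (1 - lam))
    have step1 : welchTail m τ2 σ2 t ≤ lam * A + (1 - lam) * (2 * T) := by
      rw [hwelch]
      calc ∫ u in Ioi (0:ℝ), chi2OverMPDF m u *
            (2 * stdNormalTail (Real.sqrt (t * ((τ2 + σ2 * u) / v))))
          ≤ ∫ u in Ioi (0:ℝ), (lam * (chi2OverMPDF m u *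
              (2 * stdNormalTail (Real.sqrt (t * u))))
            + (1 - lam) * (chi2OverMPDF m u * (2 * T))) :=
            setIntegral_mono_on hImain hIrhs measurableSet_Ioi hconv
      _ = lam * A + (1 - lam) * (2 * T) := by
          rw [MeasureTheory.integral_add (hItu.const_mul lam)
            (((integrableOn_chi2 (m := m) hm).mul_const (2 * T)).const_mul (1 - lam)),
            MeasureTheory.integral_const_mul, MeasureTheory.integral_const_mul, ← hA, hc2T]
    have hfin : lam * A + (1 - lam) * (2 * T) ≤ A := by
      nlinarith [mul_le_mul_of_nonneg_left hTA (by linarith : (0:ℝ) ≤ 1 - lam)]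
    linarith
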